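/- arXiv:0810.0184 — 3 statements merged into one kernel-verified Lean document; each statement's English description precedes it below -/
import Mathlib

section
/- Periodicity of complex Clifford algebras: for all m, n ∈ ℕ there is an isomorphism of ℂ-algebras C(2m+n) ≅ C(2m) ⊗[ℂ] C(n), where ⊗[ℂ] denotes the (ungraded) tensor product of ℂ-algebras. -/
open scoped TensorProduct
open CliffordAlgebra

/-- The quadratic form `Q_r` on `Fin r → ℂ` given by `Q_r v = ∑ i, (v i)^2`. -/
noncomputable def Qf (r : ℕ) : QuadraticForm ℂ (Fin r → ℂ) :=
  QuadraticMap.weightedSumSquares ℂ (fun _ : Fin r => (1 : ℂ))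

/-- The complex Clifford algebra `C(r)` on `r` generators `ω_i = ι (e_i)`,
satisfying `ω_i² = 1` and `ω_i ω_j = −ω_j ω_i` for `i ≠ j`. -/
noncomputable abbrev CliffordC (r : ℕ) := CliffordAlgebra (Qf r)

set_option linter.unusedSectionVars false


lemma Qf_apply (r : ℕ) (v : Fin r → ℂ) : Qf r v = ∑ i, v i * v i := by
  simp [Qf, QuadraticMap.weightedSumSquares_apply, smul_eq_mul]

lemma Qf_isOrtho {r : ℕ} {a b : Fin r → ℂ} (h : ∀ i, a i * b i = 0) :
    (Qf r).IsOrtho a b := by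
  rw [QuadraticMap.isOrtho_def, Qf_apply, Qf_apply, Qf_apply, ← Finset.sum_add_distrib]
  exact Finset.sum_congr rfl fun i _ => by
    simp only [Pi.add_apply]; linear_combination (2 : ℂ) * h i

lemma ι_anticomm {r : ℕ} {a b : Fin r → ℂ} (h : ∀ i, a i * b i = 0) :
    ι (Qf r) a * ι (Qf r) b = - (ι (Qf r) b * ι (Qf r) a) :=
  ι_mul_ι_comm_of_isOrtho (Qf_isOrtho h)

lemma ι_sq {r : ℕ} (a : Fin r → ℂ) :
    ι (Qf r) a * ι (Qf r) a = algebraMap ℂ _ (Qf r a) := ι_sq_scalar _ a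

noncomputable def L2 (r : ℕ) : (Fin 2 → ℂ) →ₗ[ℂ] (Fin (r+2) → ℂ) :=
  LinearMap.pi fun j =>
    Fin.addCases (motive := fun _ => (Fin 2 → ℂ) →ₗ[ℂ] ℂ) (fun _ => 0)
      (fun i => LinearMap.proj i) j

noncomputable def Lr (r : ℕ) : (Fin r → ℂ) →ₗ[ℂ] (Fin (r+2) → ℂ) :=
  LinearMap.pi fun j =>
    Fin.addCases (motive := fun _ => (Fin r → ℂ) →ₗ[ℂ] ℂ) (fun i => LinearMap.proj i)
      (fun _ => 0) j

noncomputable def R2 (r : ℕ) : (Fin (r+2) → ℂ) →ₗ[ℂ] (Fin 2 → ℂ) :=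
  LinearMap.funLeft ℂ ℂ (Fin.natAdd r)

noncomputable def Rr (r : ℕ) : (Fin (r+2) → ℂ) →ₗ[ℂ] (Fin r → ℂ) :=
  LinearMap.funLeft ℂ ℂ (Fin.castAdd 2)

@[simp] lemma L2_cast (r : ℕ) (v : Fin 2 → ℂ) (i : Fin r) :
    L2 r v (Fin.castAdd 2 i) = 0 := by
  simp [L2, LinearMap.pi_apply, Fin.addCases_left]

@[simp] lemma L2_nat (r : ℕ) (v : Fin 2 → ℂ) (i : Fin 2) :
    L2 r v (Fin.natAdd r i) = v i := by
  simp [L2, LinearMap.pi_apply, Fin.addCases_right]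

@[simp] lemma Lr_cast (r : ℕ) (v : Fin r → ℂ) (i : Fin r) :
    Lr r v (Fin.castAdd 2 i) = v i := by
  simp [Lr, LinearMap.pi_apply, Fin.addCases_left]

@[simp] lemma Lr_nat (r : ℕ) (v : Fin r → ℂ) (i : Fin 2) :
    Lr r v (Fin.natAdd r i) = 0 := by
  simp [Lr, LinearMap.pi_apply, Fin.addCases_right]

@[simp] lemma R2_apply (r : ℕ) (v : Fin (r+2) → ℂ) (i : Fin 2) :
    R2 r v i = v (Fin.natAdd r i) := rfl

@[simp] lemma Rr_apply (r : ℕ) (v : Fin (r+2) → ℂ) (i : Fin r) :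
    Rr r v i = v (Fin.castAdd 2 i) := rfl

lemma L2_mul_Lr (r : ℕ) (a : Fin 2 → ℂ) (b : Fin r → ℂ) (j : Fin (r+2)) :
    L2 r a j * Lr r b j = 0 := by
  induction j using Fin.addCases with
  | left i => simp
  | right i => simp

lemma Qf_L2 (r : ℕ) (v : Fin 2 → ℂ) : Qf (r+2) (L2 r v) = Qf 2 v := by
  rw [Qf_apply, Qf_apply, Fin.sum_univ_add]
  simp

lemma Qf_Lr (r : ℕ) (v : Fin r → ℂ) : Qf (r+2) (Lr r v) = Qf r v := by
  rw [Qf_apply, Qf_apply, Fin.sum_univ_add]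
  simp

lemma Qf_split (r : ℕ) (v : Fin (r+2) → ℂ) :
    Qf (r+2) v = Qf 2 (R2 r v) + Qf r (Rr r v) := by
  rw [Qf_apply, Qf_apply, Qf_apply, Fin.sum_univ_add]
  simp [add_comm]

section Gam
variable {k : ℕ} (a b : Fin k → ℂ)

noncomputable def Gam : CliffordC k := Complex.I • (ι (Qf k) a * ι (Qf k) b)

variable {a b}
variable (ha : Qf k a = 1) (hb : Qf k b = 1) (hab : ∀ i, a i * b i = 0)

include ha hb hab in
lemma Gam_sq : Gam a b * Gam a b = 1 := by
  have h1 : ι (Qf k) b * ι (Qf k) a = -(ι (Qf k) a * ι (Qf k) b) := by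
    rw [ι_anticomm hab, neg_neg]
  rw [Gam, smul_mul_smul_comm, Complex.I_mul_I]
  have : (ι (Qf k) a * ι (Qf k) b) * (ι (Qf k) a * ι (Qf k) b) = -1 := by
    calc (ι (Qf k) a * ι (Qf k) b) * (ι (Qf k) a * ι (Qf k) b)
        = ι (Qf k) a * (ι (Qf k) b * ι (Qf k) a) * ι (Qf k) b := by noncomm_ring
      _ = -(ι (Qf k) a * ι (Qf k) a * (ι (Qf k) b * ι (Qf k) b)) := by
          rw [h1]; noncomm_ring
      _ = -1 := by rw [ι_sq, ι_sq, ha, hb]; simp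
  rw [this]; simp

omit ha hb hab in
lemma Gam_comm {x : Fin k → ℂ} (hxa : ∀ i, x i * a i = 0) (hxb : ∀ i, x i * b i = 0) :
    ι (Qf k) x * Gam a b = Gam a b * ι (Qf k) x := by
  rw [Gam, mul_smul_comm, smul_mul_assoc]
  congr 1
  calc ι (Qf k) x * (ι (Qf k) a * ι (Qf k) b)
      = (ι (Qf k) x * ι (Qf k) a) * ι (Qf k) b := by rw [mul_assoc]
    _ = -(ι (Qf k) a * (ι (Qf k) x * ι (Qf k) b)) := by rw [ι_anticomm hxa]; noncomm_ring
    _ = ι (Qf k) a * ι (Qf k) b * ι (Qf k) x := by rw [ι_anticomm hxb]; noncomm_ring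

include ha hb hab in
lemma Gam_anticomm {x : Fin k → ℂ} (hx : ∃ c d : ℂ, x = c • a + d • b) :
    ι (Qf k) x * Gam a b = -(Gam a b * ι (Qf k) x) := by
  obtain ⟨c, d, rfl⟩ := hx
  have hba : ∀ i, b i * a i = 0 := fun i => by have := hab i; linear_combination this
  have haa := ι_sq a; have hbb := ι_sq b
  rw [ha] at haa; rw [hb] at hbb
  have h1 : ι (Qf k) b * ι (Qf k) a = -(ι (Qf k) a * ι (Qf k) b) := by
    rw [ι_anticomm hab, neg_neg]
  simp only [map_add, map_smul, Gam, mul_smul_comm, smul_mul_assoc, add_mul, mul_add]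
  rw [map_one] at haa hbb
  have e1 : ι (Qf k) a * (ι (Qf k) a * ι (Qf k) b) = ι (Qf k) b := by
    rw [← mul_assoc, haa, one_mul]
  have e2 : (ι (Qf k) a * ι (Qf k) b) * ι (Qf k) a = -ι (Qf k) b := by
    rw [mul_assoc, h1, mul_neg, ← mul_assoc, haa, one_mul]
  have e3 : ι (Qf k) b * (ι (Qf k) a * ι (Qf k) b) = -ι (Qf k) a := by
    rw [← mul_assoc, h1]; rw [neg_mul, mul_assoc, hbb]; simp
  have e4 : (ι (Qf k) a * ι (Qf k) b) * ι (Qf k) b = ι (Qf k) a := by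
    rw [mul_assoc, hbb, mul_one]
  rw [e1, e2, e3, e4]
  module

end Gam


noncomputable def f0 : Fin 2 → ℂ := Pi.single 0 1
noncomputable def f1 : Fin 2 → ℂ := Pi.single 1 1

lemma f0f1 (i : Fin 2) : f0 i * f1 i = 0 := by
  fin_cases i <;> simp [f0, f1]

lemma Qf_f0 : Qf 2 f0 = 1 := by simp [Qf_apply, Fin.sum_univ_two, f0]
lemma Qf_f1 : Qf 2 f1 = 1 := by simp [Qf_apply, Fin.sum_univ_two, f1]

lemma decomp2 (w : Fin 2 → ℂ) : w = w 0 • f0 + w 1 • f1 := by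
  funext i; fin_cases i <;> simp [f0, f1]

noncomputable def ea (r : ℕ) : Fin (r+2) → ℂ := L2 r f0
noncomputable def eb (r : ℕ) : Fin (r+2) → ℂ := L2 r f1

lemma eaeb (r : ℕ) (j : Fin (r+2)) : ea r j * eb r j = 0 := by
  induction j using Fin.addCases with
  | left i => simp [ea, eb]
  | right i => simpa [ea, eb] using f0f1 i

lemma Qf_ea (r : ℕ) : Qf (r+2) (ea r) = 1 := by rw [ea, Qf_L2, Qf_f0]
lemma Qf_eb (r : ℕ) : Qf (r+2) (eb r) = 1 := by rw [eb, Qf_L2, Qf_f1]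

lemma Lr_mul_ea (r : ℕ) (v : Fin r → ℂ) (j : Fin (r+2)) : Lr r v j * ea r j = 0 := by
  have := L2_mul_Lr r f0 v j; rw [ea]; linear_combination this
lemma Lr_mul_eb (r : ℕ) (v : Fin r → ℂ) (j : Fin (r+2)) : Lr r v j * eb r j = 0 := by
  have := L2_mul_Lr r f1 v j; rw [eb]; linear_combination this

lemma L2_decomp (r : ℕ) (w : Fin 2 → ℂ) : L2 r w = w 0 • ea r + w 1 • eb r := by
  rw [ea, eb, ← map_smul, ← map_smul, ← map_add, ← decomp2]

/-- The first algebra hom `C(2) → C(r+2)`. -/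
noncomputable def h2 (r : ℕ) : CliffordC 2 →ₐ[ℂ] CliffordC (r+2) :=
  lift (Qf 2) ⟨(ι (Qf (r+2))).comp (L2 r), fun v => by
    rw [LinearMap.comp_apply, ι_sq, Qf_L2]⟩

@[simp] lemma h2_ι (r : ℕ) (w : Fin 2 → ℂ) : h2 r (ι (Qf 2) w) = ι (Qf (r+2)) (L2 r w) := by
  rw [h2, lift_ι_apply]; rfl

/-- The second algebra hom `C(r) → C(r+2)`, `v ↦ Γ * ι (Lr v)`. -/
noncomputable def hr (r : ℕ) : CliffordC r →ₐ[ℂ] CliffordC (r+2) :=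
  lift (Qf r) ⟨(LinearMap.mulLeft ℂ (Gam (ea r) (eb r))).comp ((ι (Qf (r+2))).comp (Lr r)),
    fun v => by
      simp only [LinearMap.comp_apply, LinearMap.mulLeft_apply]
      calc Gam (ea r) (eb r) * ι (Qf (r+2)) (Lr r v) * (Gam (ea r) (eb r) * ι (Qf (r+2)) (Lr r v))
          = Gam (ea r) (eb r) * (ι (Qf (r+2)) (Lr r v) * Gam (ea r) (eb r)) * ι (Qf (r+2)) (Lr r v) := by
            noncomm_ring
        _ = (Gam (ea r) (eb r) * Gam (ea r) (eb r)) * (ι (Qf (r+2)) (Lr r v) * ι (Qf (r+2)) (Lr r v)) := by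
            rw [Gam_comm (Lr_mul_ea r v) (Lr_mul_eb r v)]; noncomm_ring
        _ = algebraMap ℂ _ (Qf r v) := by
            rw [Gam_sq (Qf_ea r) (Qf_eb r) (eaeb r), ι_sq, Qf_Lr, one_mul]⟩

@[simp] lemma hr_ι (r : ℕ) (v : Fin r → ℂ) :
    hr r (ι (Qf r) v) = Gam (ea r) (eb r) * ι (Qf (r+2)) (Lr r v) := by
  rw [hr, lift_ι_apply]; rfl

lemma comm_gen (r : ℕ) (w : Fin 2 → ℂ) (v : Fin r → ℂ) :
    Commute (ι (Qf (r+2)) (L2 r w)) (Gam (ea r) (eb r) * ι (Qf (r+2)) (Lr r v)) := by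
  unfold Commute SemiconjBy
  have h1 : ι (Qf (r+2)) (L2 r w) * Gam (ea r) (eb r)
      = -(Gam (ea r) (eb r) * ι (Qf (r+2)) (L2 r w)) :=
    Gam_anticomm (Qf_ea r) (Qf_eb r) (eaeb r) ⟨w 0, w 1, L2_decomp r w⟩
  have h2 : ι (Qf (r+2)) (L2 r w) * ι (Qf (r+2)) (Lr r v)
      = -(ι (Qf (r+2)) (Lr r v) * ι (Qf (r+2)) (L2 r w)) := ι_anticomm (L2_mul_Lr r w v)
  calc ι (Qf (r+2)) (L2 r w) * (Gam (ea r) (eb r) * ι (Qf (r+2)) (Lr r v))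
      = (ι (Qf (r+2)) (L2 r w) * Gam (ea r) (eb r)) * ι (Qf (r+2)) (Lr r v) := by rw [mul_assoc]
    _ = -(Gam (ea r) (eb r) * (ι (Qf (r+2)) (L2 r w) * ι (Qf (r+2)) (Lr r v))) := by
        rw [h1]; noncomm_ring
    _ = Gam (ea r) (eb r) * ι (Qf (r+2)) (Lr r v) * ι (Qf (r+2)) (L2 r w) := by
        rw [h2]; noncomm_ring

lemma images_commute (r : ℕ) (x : CliffordC 2) (y : CliffordC r) :
    Commute (h2 r x) (hr r y) := by
  induction x using CliffordAlgebra.induction with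
  | algebraMap c => rw [AlgHom.commutes]; exact Algebra.commute_algebraMap_left _ _
  | add a b ha hb => rw [map_add]; exact ha.add_left hb
  | mul a b ha hb => rw [map_mul]; exact ha.mul_left hb
  | ι w =>
    induction y using CliffordAlgebra.induction with
    | algebraMap c => rw [AlgHom.commutes]; exact Algebra.commute_algebraMap_right _ _
    | add a b ha hb => rw [map_add]; exact ha.add_right hb
    | mul a b ha hb => rw [map_mul]; exact ha.mul_right hb
    | ι v => rw [h2_ι, hr_ι]; exact comm_gen r w v

/-- `C(2) ⊗ C(r) → C(r+2)`. -/
noncomputable def Hmap (r : ℕ) : (CliffordC 2 ⊗[ℂ] CliffordC r) →ₐ[ℂ] CliffordC (r+2) :=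
  Algebra.TensorProduct.lift (h2 r) (hr r) (images_commute r)


@[simp] lemma Hmap_tmul (r : ℕ) (x : CliffordC 2) (y : CliffordC r) :
    Hmap r (x ⊗ₜ y) = h2 r x * hr r y := Algebra.TensorProduct.lift_tmul _ _ _ _ _

lemma ea_def (r : ℕ) : ea r = L2 r f0 := rfl
lemma eb_def (r : ℕ) : eb r = L2 r f1 := rfl


noncomputable def Gmap (r : ℕ) : (Fin (r+2) → ℂ) →ₗ[ℂ] (CliffordC 2 ⊗[ℂ] CliffordC r) :=
  ((TensorProduct.mk ℂ (CliffordC 2) (CliffordC r)).flip 1) ∘ₗ ((ι (Qf 2)) ∘ₗ R2 r)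
  + (TensorProduct.mk ℂ (CliffordC 2) (CliffordC r) (Gam f0 f1)) ∘ₗ ((ι (Qf r)) ∘ₗ Rr r)

lemma Gmap_apply (r : ℕ) (v : Fin (r+2) → ℂ) :
    Gmap r v = ι (Qf 2) (R2 r v) ⊗ₜ 1 + Gam f0 f1 ⊗ₜ ι (Qf r) (Rr r v) := rfl

lemma Gmap_cond (r : ℕ) (v : Fin (r+2) → ℂ) :
    Gmap r v * Gmap r v = algebraMap ℂ _ (Qf (r+2) v) := by
  rw [Gmap_apply]
  set a := ι (Qf 2) (R2 r v)
  set g := Gam f0 f1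
  set b := ι (Qf r) (Rr r v)
  have hag : a * g = -(g * a) :=
    Gam_anticomm Qf_f0 Qf_f1 f0f1 ⟨R2 r v 0, R2 r v 1, decomp2 _⟩
  have hgg : g * g = 1 := Gam_sq Qf_f0 Qf_f1 f0f1
  have haa : a * a = algebraMap ℂ _ (Qf 2 (R2 r v)) := ι_sq _
  have hbb : b * b = algebraMap ℂ _ (Qf r (Rr r v)) := ι_sq _
  rw [add_mul, mul_add, mul_add]
  rw [Algebra.TensorProduct.tmul_mul_tmul, Algebra.TensorProduct.tmul_mul_tmul,
    Algebra.TensorProduct.tmul_mul_tmul, Algebra.TensorProduct.tmul_mul_tmul]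
  rw [haa, hgg, hag, one_mul, mul_one, hbb]
  have e1 : algebraMap ℂ (CliffordC 2) (Qf 2 (R2 r v)) ⊗ₜ[ℂ] (1 : CliffordC r)
      = algebraMap ℂ (CliffordC 2 ⊗[ℂ] CliffordC r) (Qf 2 (R2 r v)) :=
    (Algebra.TensorProduct.algebraMap_apply (Qf 2 (R2 r v))).symm
  have e2 : (1 : CliffordC 2) ⊗ₜ[ℂ] algebraMap ℂ (CliffordC r) (Qf r (Rr r v))
      = algebraMap ℂ (CliffordC 2 ⊗[ℂ] CliffordC r) (Qf r (Rr r v)) :=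
    Algebra.TensorProduct.includeRight.commutes _
  rw [e1, e2, TensorProduct.neg_tmul, Qf_split r v, map_add]
  simp only [one_mul, neg_smul, one_smul]
  abel

/-- `C(r+2) → C(2) ⊗ C(r)`. -/
noncomputable def Gmap' (r : ℕ) : CliffordC (r+2) →ₐ[ℂ] (CliffordC 2 ⊗[ℂ] CliffordC r) :=
  lift (Qf (r+2)) ⟨Gmap r, Gmap_cond r⟩

@[simp] lemma Gmap'_ι (r : ℕ) (v : Fin (r+2) → ℂ) :
    Gmap' r (ι (Qf (r+2)) v) = ι (Qf 2) (R2 r v) ⊗ₜ 1 + Gam f0 f1 ⊗ₜ ι (Qf r) (Rr r v) := by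
  rw [Gmap', lift_ι_apply, Gmap_apply]


lemma R2_L2 (r : ℕ) (w : Fin 2 → ℂ) : R2 r (L2 r w) = w := by
  funext i; simp
lemma Rr_L2 (r : ℕ) (w : Fin 2 → ℂ) : Rr r (L2 r w) = 0 := by
  funext i; simp
lemma R2_Lr (r : ℕ) (v : Fin r → ℂ) : R2 r (Lr r v) = 0 := by
  funext i; simp
lemma Rr_Lr (r : ℕ) (v : Fin r → ℂ) : Rr r (Lr r v) = v := by
  funext i; simp
lemma split_LR (r : ℕ) (v : Fin (r+2) → ℂ) : L2 r (R2 r v) + Lr r (Rr r v) = v := by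
  funext j
  induction j using Fin.addCases with
  | left i => simp
  | right i => simp

lemma h2_Gam (r : ℕ) : h2 r (Gam f0 f1) = Gam (ea r) (eb r) := by
  rw [Gam, Gam, map_smul, map_mul, h2_ι, h2_ι, ea_def, eb_def]

lemma comp1 (r : ℕ) : (Hmap r).comp (Gmap' r) = AlgHom.id ℂ (CliffordC (r+2)) := by
  apply CliffordAlgebra.hom_ext
  apply LinearMap.ext; intro v
  simp only [LinearMap.comp_apply, AlgHom.toLinearMap_apply, AlgHom.comp_apply, AlgHom.id_apply]
  rw [Gmap'_ι, map_add, Hmap_tmul, Hmap_tmul, map_one, mul_one, h2_ι, h2_Gam, hr_ι]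
  rw [← mul_assoc, Gam_sq (Qf_ea r) (Qf_eb r) (eaeb r), one_mul]
  rw [← map_add, split_LR]

lemma comp2 (r : ℕ) :
    (Gmap' r).comp (Hmap r) = AlgHom.id ℂ (CliffordC 2 ⊗[ℂ] CliffordC r) := by
  apply Algebra.TensorProduct.ext
  · apply CliffordAlgebra.hom_ext
    apply LinearMap.ext; intro w
    simp only [LinearMap.comp_apply, AlgHom.toLinearMap_apply, AlgHom.comp_apply,
      AlgHom.id_apply, Algebra.TensorProduct.includeLeft_apply, AlgHom.restrictScalars_apply]
    rw [Hmap_tmul, map_one, mul_one, h2_ι, Gmap'_ι, R2_L2, Rr_L2, map_zero,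
      TensorProduct.tmul_zero, add_zero]
  · apply CliffordAlgebra.hom_ext
    apply LinearMap.ext; intro v
    simp only [LinearMap.comp_apply, AlgHom.toLinearMap_apply, AlgHom.comp_apply,
      AlgHom.id_apply, Algebra.TensorProduct.includeRight_apply, AlgHom.restrictScalars_apply]
    rw [Hmap_tmul, map_one, one_mul, hr_ι, map_mul]
    have g1 : Gmap' r (Gam (ea r) (eb r)) = Gam f0 f1 ⊗ₜ 1 := by
      rw [Gam, map_smul, map_mul, Gmap'_ι, Gmap'_ι, ea_def, eb_def, R2_L2, R2_L2,
        Rr_L2, Rr_L2, map_zero, TensorProduct.tmul_zero, add_zero, add_zero,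
        Algebra.TensorProduct.tmul_mul_tmul, mul_one, Gam, TensorProduct.smul_tmul']
    have g2 : Gmap' r (ι (Qf (r+2)) (Lr r v)) = Gam f0 f1 ⊗ₜ ι (Qf r) v := by
      rw [Gmap'_ι, R2_Lr, Rr_Lr, map_zero, TensorProduct.zero_tmul, zero_add]
    rw [g1, g2, Algebra.TensorProduct.tmul_mul_tmul, one_mul,
      Gam_sq Qf_f0 Qf_f1 f0f1]

/-- The step equivalence `C(r+2) ≃ C(2) ⊗ C(r)`. -/
noncomputable def StepEquiv (r : ℕ) : CliffordC (r+2) ≃ₐ[ℂ] (CliffordC 2 ⊗[ℂ] CliffordC r) :=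
  AlgEquiv.ofAlgHom (Gmap' r) (Hmap r) (comp2 r) (comp1 r)


noncomputable def toC : CliffordC 0 →ₐ[ℂ] ℂ :=
  lift (Qf 0) ⟨0, fun v => by simp [Qf_apply]⟩

noncomputable def C0equiv : CliffordC 0 ≃ₐ[ℂ] ℂ :=
  AlgEquiv.ofAlgHom toC (Algebra.ofId ℂ _)
    (AlgHom.ext fun x => by simpa using (toC.comp (Algebra.ofId ℂ _)).commutes x)
    (by
      apply CliffordAlgebra.hom_ext
      apply LinearMap.ext; intro v
      have hv : (ι (Qf 0)) v = 0 := by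
        rw [Subsingleton.elim v (0 : Fin 0 → ℂ), map_zero]
      simp [hv])

noncomputable def castEquiv {a b : ℕ} (h : a = b) : CliffordC a ≃ₐ[ℂ] CliffordC b :=
  h ▸ AlgEquiv.refl

/-- Periodicity of complex Clifford algebras:
`C(2m+n) ≅ C(2m) ⊗[ℂ] C(n)` as ℂ-algebras. -/
theorem clifford_periodicity (m n : ℕ) :
    Nonempty (CliffordC (2 * m + n) ≃ₐ[ℂ] (CliffordC (2 * m) ⊗[ℂ] CliffordC n)) := by
  induction m with
  | zero =>
    exact ⟨(castEquiv (by ring : 2*0+n = n)).trans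
      ((Algebra.TensorProduct.lid ℂ (CliffordC n)).symm.trans
        (Algebra.TensorProduct.congr C0equiv.symm AlgEquiv.refl))⟩
  | succ m ih =>
    obtain ⟨e⟩ := ih
    exact ⟨(castEquiv (by ring : 2*(m+1)+n = (2*m+n)+2)).trans
      ((StepEquiv (2*m+n)).trans
        ((Algebra.TensorProduct.congr AlgEquiv.refl e).trans
          ((Algebra.TensorProduct.assoc (R := ℂ) (S := ℂ) (T := ℂ) (A := CliffordC 2) (C := CliffordC (2*m)) (D := CliffordC n)).symm.trans
            (Algebra.TensorProduct.congr
              ((StepEquiv (2*m)).symm.trans (castEquiv (by ring : 2*m+2 = 2*(m+1))))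
              AlgEquiv.refl))))⟩
end

section
/- For every n ∈ ℕ there is an isomorphism of ℂ-algebras C(2n+1) ≅ C(2n) × C(2n), the product of two copies of the even Clifford algebra. -/
namespace CliffOdd

variable {r : ℕ}

noncomputable def g (r : ℕ) (i : Fin r) : CliffordC r :=
  CliffordAlgebra.ι (Qf r) (Pi.single i 1)

lemma Qf_apply (v : Fin r → ℂ) : Qf r v = ∑ i, v i * v i := by
  simp [Qf, QuadraticMap.weightedSumSquares_apply]

lemma Qf_single (i : Fin r) (c : ℂ) : Qf r (Pi.single i c) = c * c := by
  rw [Qf_apply]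
  rw [Finset.sum_eq_single i] <;> simp +contextual [Pi.single_apply]

lemma g_sq (i : Fin r) : g r i * g r i = 1 := by
  rw [g, CliffordAlgebra.ι_sq_scalar, Qf_single, one_mul, map_one]

lemma g_anti {i j : Fin r} (h : i ≠ j) : g r i * g r j = -(g r j * g r i) := by
  have h0 : QuadraticMap.polar (Qf r) (Pi.single i 1) (Pi.single j 1) = 0 := by
    rw [QuadraticMap.polar, Qf_apply, Qf_single, Qf_single]
    have : ∀ k, ((Pi.single i 1 + Pi.single j 1 : Fin r → ℂ) k) *
        ((Pi.single i 1 + Pi.single j 1 : Fin r → ℂ) k)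
        = (Pi.single i 1 : Fin r → ℂ) k * (Pi.single i 1 : Fin r → ℂ) k
          + (Pi.single j 1 : Fin r → ℂ) k * (Pi.single j 1 : Fin r → ℂ) k := by
      intro k
      by_cases hk : k = i <;> by_cases hk' : k = j <;>
        simp_all [Pi.single_apply]
    simp only [this, Finset.sum_add_distrib]
    rw [← Qf_apply, ← Qf_apply, Qf_single, Qf_single]
    ring
  have := CliffordAlgebra.ι_mul_ι_add_swap (Q := Qf r) (Pi.single i 1) (Pi.single j 1)
  rw [h0, map_zero] at this
  rw [g, g]
  exact eq_neg_of_add_eq_zero_left this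

lemma ι_eq_sum (v : Fin r → ℂ) :
    CliffordAlgebra.ι (Qf r) v = ∑ i, v i • g r i := by
  have hv : v = ∑ i, v i • (Pi.single i 1 : Fin r → ℂ) := by
    funext k
    simp [Pi.single_apply]
  conv_lhs => rw [hv]
  simp [g]


lemma g_comm_list (i : Fin r) (l : List (Fin r)) :
    g r i * (l.map (g r)).prod
      = ((-1:ℂ)^((l.filter (· ≠ i)).length)) • ((l.map (g r)).prod * g r i) := by
  induction l with
  | nil => simp
  | cons a t ih =>
    simp only [List.map_cons, List.prod_cons]
    by_cases ha : a = i
    · subst ha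
      have hf : ((a :: t).filter (· ≠ a)).length = (t.filter (· ≠ a)).length := by simp
      rw [hf]
      calc g r a * (g r a * (t.map (g r)).prod)
          = g r a * (((-1:ℂ)^((t.filter (· ≠ a)).length)) •
              ((t.map (g r)).prod * g r a)) := by rw [ih]
        _ = ((-1:ℂ)^((t.filter (· ≠ a)).length)) •
              (g r a * (t.map (g r)).prod * g r a) := by
            rw [mul_smul_comm, mul_assoc]
    · have ha' : i ≠ a := fun h => ha h.symm
      have hf : ((a :: t).filter (· ≠ i)).length = (t.filter (· ≠ i)).length + 1 := by
        simp [ha]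
      rw [hf]
      calc g r i * (g r a * (t.map (g r)).prod)
          = (g r i * g r a) * (t.map (g r)).prod := by rw [mul_assoc]
        _ = -(g r a * (g r i * (t.map (g r)).prod)) := by
            rw [g_anti ha']; rw [neg_mul, mul_assoc]
        _ = -(g r a * (((-1:ℂ)^((t.filter (· ≠ i)).length)) •
              ((t.map (g r)).prod * g r i))) := by rw [ih]
        _ = ((-1:ℂ)^((t.filter (· ≠ i)).length + 1)) •
              (g r a * (t.map (g r)).prod * g r i) := by
            rw [mul_smul_comm, pow_succ, mul_smul, mul_assoc]
            simp

lemma g_prod_sq (l : List (Fin r)) (h : l.Nodup) :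
    (l.map (g r)).prod * (l.map (g r)).prod
      = ((-1:ℂ)^(l.length * (l.length - 1) / 2)) • 1 := by
  induction l with
  | nil => simp
  | cons a t ih =>
    obtain ⟨hat, ht⟩ := List.nodup_cons.mp h
    have hfilt : t.filter (· ≠ a) = t := by
      rw [List.filter_eq_self]
      intro b hb
      simp only [ne_eq, decide_eq_true_eq]
      exact fun hba => hat (hba ▸ hb)
    have hcomm := g_comm_list a t
    rw [hfilt] at hcomm
    have hswap : (t.map (g r)).prod * g r a
        = ((-1:ℂ)^t.length) • (g r a * (t.map (g r)).prod) := by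
      rw [hcomm, smul_smul, ← pow_add]
      have : (-1:ℂ)^(t.length + t.length) = 1 := by
        rw [← two_mul, pow_mul]
        norm_num
      rw [this, one_smul]
    have harith : (a :: t).length * ((a :: t).length - 1) / 2
        = t.length + t.length * (t.length - 1) / 2 := by
      simp only [List.length_cons, Nat.add_sub_cancel]
      have h2 : (t.length + 1) * t.length = t.length * (t.length - 1) + t.length * 2 := by
        cases t.length with
        | zero => simp
        | succ m => simp only [Nat.succ_sub_one]; ring
      rw [h2, Nat.add_mul_div_right _ _ (by norm_num : 0 < 2), Nat.add_comm]
    simp only [List.map_cons, List.prod_cons, harith]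
    calc g r a * (t.map (g r)).prod * (g r a * (t.map (g r)).prod)
        = g r a * ((t.map (g r)).prod * g r a) * (t.map (g r)).prod := by
          rw [mul_assoc, mul_assoc, mul_assoc]
      _ = ((-1:ℂ)^t.length) • (g r a * (g r a * (t.map (g r)).prod) * (t.map (g r)).prod) := by
          rw [hswap, mul_smul_comm, smul_mul_assoc]
      _ = ((-1:ℂ)^t.length) • ((t.map (g r)).prod * (t.map (g r)).prod) := by
          rw [← mul_assoc, g_sq, one_mul]
      _ = ((-1:ℂ)^(t.length + t.length * (t.length - 1) / 2)) • 1 := by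
          rw [ih ht, smul_smul, ← pow_add]

lemma filter_ne_length {α} [DecidableEq α] {l : List α} {i : α}
    (hn : l.Nodup) (hm : i ∈ l) : (l.filter (· ≠ i)).length = l.length - 1 := by
  have hfe : (fun x => decide (x ≠ i)) = (fun x => x != i) := by
    funext x; simp only [ne_eq, bne, decide_not]; rfl
  rw [hfe, ← List.Nodup.erase_eq_filter hn i]
  exact List.length_erase_of_mem hm

/-- the chirality element of the even Clifford algebra -/
noncomputable def ω (n : ℕ) : CliffordC (2*n) :=
  (Complex.I ^ n) • ((List.finRange (2*n)).map (g (2*n))).prod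

lemma neg_one_pow_half (m : ℕ) : ((-1:ℂ)^(2*m*(2*m-1)/2)) = (-1:ℂ)^m := by
  have h : 2*m*(2*m-1)/2 = m*(2*m-1) := by
    rw [mul_assoc, Nat.mul_div_cancel_left _ (by norm_num : 0 < 2)]
  rw [h]
  rcases Nat.even_or_odd m with he | ho
  · rw [(he.mul_right _).neg_one_pow, he.neg_one_pow]
  · have hm1 : m ≠ 0 := by rintro rfl; exact (Nat.not_odd_zero) ho
    have h1 : Odd (2*m-1) := ⟨m-1, by omega⟩
    rw [(ho.mul h1).neg_one_pow, ho.neg_one_pow]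

lemma I_pow_sq (m : ℕ) : (Complex.I:ℂ)^m * Complex.I^m = (-1:ℂ)^m := by
  rw [← mul_pow, Complex.I_mul_I]

lemma ω_sq (n : ℕ) : ω n * ω n = 1 := by
  rw [ω, smul_mul_smul_comm, I_pow_sq,
    g_prod_sq _ (List.nodup_finRange _), List.length_finRange, neg_one_pow_half,
    smul_smul, ← pow_add, ← two_mul, pow_mul]
  norm_num

lemma g_ω_anti (n : ℕ) (i : Fin (2*n)) : g (2*n) i * ω n + ω n * g (2*n) i = 0 := by
  have hpos : 0 < 2*n := i.pos
  have h := g_comm_list i (List.finRange (2*n))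
  rw [filter_ne_length (List.nodup_finRange _) (List.mem_finRange i),
    List.length_finRange] at h
  have hodd : Odd (2*n - 1) := ⟨n - 1, by omega⟩
  rw [hodd.neg_one_pow, neg_one_smul] at h
  rw [ω, mul_smul_comm, smul_mul_assoc, h]
  simp

lemma ι_ω_anti (n : ℕ) (w : Fin (2*n) → ℂ) :
    CliffordAlgebra.ι (Qf (2*n)) w * ω n + ω n * CliffordAlgebra.ι (Qf (2*n)) w = 0 := by
  rw [ι_eq_sum, Finset.sum_mul, Finset.mul_sum, ← Finset.sum_add_distrib]
  refine Finset.sum_eq_zero fun i _ => ?_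
  rw [smul_mul_assoc, mul_smul_comm, ← smul_add, g_ω_anti, smul_zero]

/-! ### maps between `C(2n)` and `C(2n+1)` -/

/-- extension by zero in the last coordinate -/
noncomputable def extL (n : ℕ) : (Fin (2*n) → ℂ) →ₗ[ℂ] (Fin (2*n+1) → ℂ) where
  toFun v := Fin.snoc v 0
  map_add' u v := by
    funext j
    refine Fin.lastCases ?_ (fun j => ?_) j <;> simp [Fin.snoc_castSucc]
  map_smul' c v := by
    funext j
    refine Fin.lastCases ?_ (fun j => ?_) j <;> simp [Fin.snoc_castSucc]

/-- restriction to the first `2n` coordinates -/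
noncomputable def initL (n : ℕ) : (Fin (2*n+1) → ℂ) →ₗ[ℂ] (Fin (2*n) → ℂ) :=
  LinearMap.funLeft ℂ ℂ Fin.castSucc

lemma initL_extL (n : ℕ) (v : Fin (2*n) → ℂ) : initL n (extL n v) = v := by
  funext j
  simp [initL, extL, LinearMap.funLeft, Fin.snoc_castSucc]

lemma extL_last (n : ℕ) (v : Fin (2*n) → ℂ) : extL n v (Fin.last (2*n)) = 0 := by
  simp [extL]

lemma Qf_extL (n : ℕ) (v : Fin (2*n) → ℂ) : Qf (2*n+1) (extL n v) = Qf (2*n) v := by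
  rw [Qf_apply, Qf_apply, Fin.sum_univ_castSucc]
  simp [extL]

/-- the canonical algebra map `C(2n) → C(2n+1)` -/
noncomputable def θ (n : ℕ) : CliffordC (2*n) →ₐ[ℂ] CliffordC (2*n+1) :=
  CliffordAlgebra.lift _ ⟨(CliffordAlgebra.ι (Qf (2*n+1))).comp (extL n), fun m => by
    rw [LinearMap.comp_apply, CliffordAlgebra.ι_sq_scalar, Qf_extL]⟩

lemma θ_ι (n : ℕ) (w : Fin (2*n) → ℂ) :
    θ n (CliffordAlgebra.ι (Qf (2*n)) w) = CliffordAlgebra.ι (Qf (2*n+1)) (extL n w) :=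
  CliffordAlgebra.lift_ι_apply _ _ _

lemma extL_single (n : ℕ) (j : Fin (2*n)) :
    extL n (Pi.single j 1) = Pi.single j.castSucc 1 := by
  funext k
  refine Fin.lastCases ?_ (fun k => ?_) k
  · simp [extL, Pi.single_apply, (Fin.castSucc_lt_last j).ne']
  · simp [extL, Fin.snoc_castSucc, Pi.single_apply, Fin.castSucc_inj]

lemma θ_g (n : ℕ) (j : Fin (2*n)) :
    θ n (g (2*n) j) = g (2*n+1) j.castSucc := by
  rw [g, θ_ι, extL_single]; rfl

/-- the index list of the first `2n` generators inside `Fin (2n+1)` -/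
noncomputable def lB (n : ℕ) : List (Fin (2*n+1)) := (List.finRange (2*n)).map Fin.castSucc

lemma θ_ω (n : ℕ) :
    θ n (ω n) = (Complex.I ^ n) • ((lB n).map (g (2*n+1))).prod := by
  rw [ω, map_smul, map_list_prod, lB, List.map_map, List.map_map]
  exact congrArg (fun t => Complex.I ^ n • List.prod t)
    (List.map_congr_left fun j _ => θ_g n j)

lemma lB_nodup (n : ℕ) : (lB n).Nodup :=
  (List.nodup_finRange _).map (Fin.castSucc_injective _)

lemma lB_length (n : ℕ) : (lB n).length = 2*n := by simp [lB]

lemma glast_θω_comm (n : ℕ) :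
    g (2*n+1) (Fin.last (2*n)) * θ n (ω n) = θ n (ω n) * g (2*n+1) (Fin.last (2*n)) := by
  have h := g_comm_list (Fin.last (2*n)) (lB n)
  have hfilt : (lB n).filter (· ≠ Fin.last (2*n)) = lB n := by
    rw [List.filter_eq_self]
    intro b hb
    simp only [ne_eq, decide_eq_true_eq]
    rw [lB, List.mem_map] at hb
    obtain ⟨j, -, rfl⟩ := hb
    exact (Fin.castSucc_lt_last j).ne
  rw [hfilt, lB_length, pow_mul] at h
  norm_num at h
  rw [θ_ω, mul_smul_comm, smul_mul_assoc, h]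

lemma gcs_θω_anti (n : ℕ) (j : Fin (2*n)) :
    g (2*n+1) j.castSucc * θ n (ω n) = -(θ n (ω n) * g (2*n+1) j.castSucc) := by
  have h := g_comm_list j.castSucc (lB n)
  have hmem : j.castSucc ∈ lB n := by
    rw [lB, List.mem_map]; exact ⟨j, List.mem_finRange j, rfl⟩
  rw [filter_ne_length (lB_nodup n) hmem, lB_length] at h
  have hpos : 0 < 2*n := j.pos
  have hodd : Odd (2*n - 1) := ⟨n - 1, by omega⟩
  rw [hodd.neg_one_pow, neg_one_smul] at h
  rw [θ_ω, mul_smul_comm, smul_mul_assoc, h]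
  simp

lemma θω_sq (n : ℕ) : θ n (ω n) * θ n (ω n) = 1 := by
  rw [← map_mul, ω_sq, map_one]

/-- the central chirality element of the odd Clifford algebra -/
noncomputable def Ω (n : ℕ) : CliffordC (2*n+1) :=
  θ n (ω n) * g (2*n+1) (Fin.last (2*n))

lemma θω_Ω (n : ℕ) : θ n (ω n) * Ω n = g (2*n+1) (Fin.last (2*n)) := by
  rw [Ω, ← mul_assoc, θω_sq, one_mul]

lemma Ω_sq (n : ℕ) : Ω n * Ω n = 1 := by
  rw [Ω, mul_assoc, ← mul_assoc (g _ _), glast_θω_comm, mul_assoc, g_sq, mul_one, θω_sq]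

lemma Ω_g_comm (n : ℕ) (i : Fin (2*n+1)) : Ω n * g (2*n+1) i = g (2*n+1) i * Ω n := by
  refine Fin.lastCases ?_ (fun j => ?_) i
  · rw [Ω, mul_assoc, g_sq, mul_one, ← mul_assoc, glast_θω_comm, mul_assoc, g_sq, mul_one]
  · have h1 := gcs_θω_anti n j
    have h2 : g (2*n+1) (Fin.last (2*n)) * g (2*n+1) j.castSucc
        = -(g (2*n+1) j.castSucc * g (2*n+1) (Fin.last (2*n))) :=
      g_anti (Fin.castSucc_lt_last j).ne'
    rw [Ω, mul_assoc, h2, mul_neg, ← mul_assoc]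
    conv_rhs => rw [← mul_assoc, h1, neg_mul]

lemma Ω_central (n : ℕ) (x : CliffordC (2*n+1)) : Ω n * x = x * Ω n := by
  induction x using CliffordAlgebra.induction with
  | algebraMap c => rw [← Algebra.commutes]
  | ι v =>
    rw [ι_eq_sum, Finset.mul_sum, Finset.sum_mul]
    refine Finset.sum_congr rfl fun i _ => ?_
    rw [mul_smul_comm, smul_mul_assoc, Ω_g_comm]
  | mul x y hx hy => rw [← mul_assoc, hx, mul_assoc, hy, mul_assoc]
  | add x y hx hy => rw [mul_add, add_mul, hx, hy]

/-! ### idempotents -/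

noncomputable def pI (n : ℕ) : CliffordC (2*n+1) := (2⁻¹:ℂ) • (1 + Ω n)
noncomputable def qI (n : ℕ) : CliffordC (2*n+1) := (2⁻¹:ℂ) • (1 - Ω n)

lemma pq_add (n : ℕ) : pI n + qI n = 1 := by
  rw [pI, qI, ← smul_add]
  rw [show (1 + Ω n) + (1 - Ω n) = (2:ℂ) • 1 by rw [two_smul]; abel]
  rw [smul_smul]; norm_num

lemma pq_sub (n : ℕ) : pI n - qI n = Ω n := by
  rw [pI, qI, ← smul_sub]
  rw [show (1 + Ω n) - (1 - Ω n) = (2:ℂ) • Ω n by rw [two_smul]; abel]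
  rw [smul_smul]; norm_num

lemma p_central (n : ℕ) (x : CliffordC (2*n+1)) : pI n * x = x * pI n := by
  rw [pI, smul_mul_assoc, mul_smul_comm, add_mul, mul_add, one_mul, mul_one, Ω_central]

lemma q_central (n : ℕ) (x : CliffordC (2*n+1)) : qI n * x = x * qI n := by
  rw [qI, smul_mul_assoc, mul_smul_comm, sub_mul, mul_sub, one_mul, mul_one, Ω_central]

lemma pp (n : ℕ) : pI n * pI n = pI n := by
  rw [pI, smul_mul_smul_comm]
  rw [show (1 + Ω n) * (1 + Ω n) = (2:ℂ) • (1 + Ω n) by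
    rw [mul_add, mul_one, add_mul, one_mul, Ω_sq, two_smul]; abel]
  rw [smul_smul]; norm_num

lemma qq (n : ℕ) : qI n * qI n = qI n := by
  rw [qI, smul_mul_smul_comm]
  rw [show (1 - Ω n) * (1 - Ω n) = (2:ℂ) • (1 - Ω n) by
    rw [mul_sub, mul_one, sub_mul, one_mul, Ω_sq, two_smul]; abel]
  rw [smul_smul]; norm_num

lemma pq0 (n : ℕ) : pI n * qI n = 0 := by
  rw [pI, qI, smul_mul_smul_comm]
  rw [show (1 + Ω n) * (1 - Ω n) = 0 by
    rw [mul_sub, mul_one, add_mul, one_mul, Ω_sq]; abel]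
  rw [smul_zero]

lemma qp0 (n : ℕ) : qI n * pI n = 0 := by
  rw [pI, qI, smul_mul_smul_comm]
  rw [show (1 - Ω n) * (1 + Ω n) = 0 by
    rw [mul_add, mul_one, sub_mul, one_mul, Ω_sq]; abel]
  rw [smul_zero]

/-! ### the map `ψ : C(2n) × C(2n) → C(2n+1)` -/

noncomputable def ψL (n : ℕ) :
    (CliffordC (2*n) × CliffordC (2*n)) →ₗ[ℂ] CliffordC (2*n+1) :=
  (LinearMap.mulRight ℂ (pI n)) ∘ₗ (θ n).toLinearMap ∘ₗ LinearMap.fst ℂ _ _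
    + (LinearMap.mulRight ℂ (qI n)) ∘ₗ (θ n).toLinearMap ∘ₗ LinearMap.snd ℂ _ _

lemma ψL_apply (n : ℕ) (x : CliffordC (2*n) × CliffordC (2*n)) :
    ψL n x = θ n x.1 * pI n + θ n x.2 * qI n := rfl

lemma central_mul {B' : Type*} [Ring B'] {x : B'} (hx : ∀ z, x * z = z * x)
    (a b y : B') : (a * x) * (b * y) = (a * b) * (x * y) := by
  rw [mul_assoc, ← mul_assoc x, hx b, mul_assoc, ← mul_assoc, ← mul_assoc]

noncomputable def ψ (n : ℕ) :
    (CliffordC (2*n) × CliffordC (2*n)) →ₐ[ℂ] CliffordC (2*n+1) :=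
  AlgHom.ofLinearMap (ψL n)
    (by rw [ψL_apply]; show θ n 1 * _ + θ n 1 * _ = 1
        rw [map_one, one_mul, one_mul, pq_add])
    (fun x y => by
      rw [ψL_apply, ψL_apply, ψL_apply, Prod.fst_mul, Prod.snd_mul, map_mul, map_mul]
      rw [add_mul, mul_add, mul_add,
        central_mul (p_central n), central_mul (p_central n),
        central_mul (q_central n), central_mul (q_central n),
        pp, pq0, qp0, qq, mul_zero, mul_zero, add_zero, zero_add])

/-! ### the map `φ : C(2n+1) → C(2n) × C(2n)` -/

noncomputable def φf (n : ℕ) :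
    (Fin (2*n+1) → ℂ) →ₗ[ℂ] (CliffordC (2*n) × CliffordC (2*n)) :=
  ((CliffordAlgebra.ι (Qf (2*n))) ∘ₗ initL n
      + LinearMap.smulRight (LinearMap.proj (Fin.last (2*n))) (ω n)).prod
    ((CliffordAlgebra.ι (Qf (2*n))) ∘ₗ initL n
      - LinearMap.smulRight (LinearMap.proj (Fin.last (2*n))) (ω n))

lemma φf_apply (n : ℕ) (v : Fin (2*n+1) → ℂ) :
    φf n v = (CliffordAlgebra.ι (Qf (2*n)) (initL n v) + v (Fin.last (2*n)) • ω n,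
      CliffordAlgebra.ι (Qf (2*n)) (initL n v) - v (Fin.last (2*n)) • ω n) := rfl

lemma sq_helper (n : ℕ) (w : Fin (2*n) → ℂ) (c : ℂ) :
    (CliffordAlgebra.ι (Qf (2*n)) w + c • ω n) * (CliffordAlgebra.ι (Qf (2*n)) w + c • ω n)
      = algebraMap ℂ _ (Qf (2*n) w + c * c) := by
  have h0 : c • (CliffordAlgebra.ι (Qf (2*n)) w * ω n)
      + c • (ω n * CliffordAlgebra.ι (Qf (2*n)) w) = 0 := by
    rw [← smul_add, ι_ω_anti, smul_zero]
  have h1 : c • (CliffordAlgebra.ι (Qf (2*n)) w * ω n)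
      = -(c • (ω n * CliffordAlgebra.ι (Qf (2*n)) w)) :=
    eq_neg_of_add_eq_zero_left h0
  rw [mul_add, add_mul, add_mul, CliffordAlgebra.ι_sq_scalar, mul_smul_comm, smul_mul_assoc,
    smul_mul_smul_comm, ω_sq, map_add, Algebra.algebraMap_eq_smul_one (c * c), h1]
  abel

lemma Qf_split (n : ℕ) (v : Fin (2*n+1) → ℂ) :
    Qf (2*n+1) v = Qf (2*n) (initL n v) + v (Fin.last (2*n)) * v (Fin.last (2*n)) := by
  rw [Qf_apply, Qf_apply, Fin.sum_univ_castSucc]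
  rfl

lemma φf_cond (n : ℕ) (v : Fin (2*n+1) → ℂ) :
    φf n v * φf n v = algebraMap ℂ _ (Qf (2*n+1) v) := by
  rw [φf_apply, Prod.mk_mul_mk]
  have h2 : ∀ c : ℂ, algebraMap ℂ (CliffordC (2*n) × CliffordC (2*n)) c
      = (algebraMap ℂ _ c, algebraMap ℂ _ c) := fun c => rfl
  rw [h2, Prod.mk.injEq]
  constructor
  · rw [sq_helper, Qf_split]
  · rw [sub_eq_add_neg, ← neg_smul, sq_helper, Qf_split, neg_mul_neg]

noncomputable def φ (n : ℕ) :
    CliffordC (2*n+1) →ₐ[ℂ] (CliffordC (2*n) × CliffordC (2*n)) :=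
  CliffordAlgebra.lift _ ⟨φf n, φf_cond n⟩

lemma φ_ι (n : ℕ) (v : Fin (2*n+1) → ℂ) :
    φ n (CliffordAlgebra.ι (Qf (2*n+1)) v) = φf n v :=
  CliffordAlgebra.lift_ι_apply _ _ _

lemma φθ (n : ℕ) (a : CliffordC (2*n)) : φ n (θ n a) = (a, a) := by
  have h : (φ n).comp (θ n)
      = (AlgHom.id ℂ (CliffordC (2*n))).prod (AlgHom.id ℂ (CliffordC (2*n))) := by
    refine CliffordAlgebra.hom_ext (LinearMap.ext fun w => ?_)
    simp only [LinearMap.comp_apply, AlgHom.toLinearMap_apply, AlgHom.comp_apply]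
    rw [θ_ι, φ_ι, φf_apply, initL_extL, extL_last]
    simp
  exact congrArg (fun f => f a) (congrArg (fun (f : _ →ₐ[ℂ] _) => f.toFun) h)

lemma init_single_last (n : ℕ) : initL n (Pi.single (Fin.last (2*n)) 1) = 0 := by
  funext j
  simp [initL, LinearMap.funLeft, Pi.single_apply, (Fin.castSucc_lt_last j).ne]

lemma φ_glast (n : ℕ) : φ n (g (2*n+1) (Fin.last (2*n))) = (ω n, -ω n) := by
  rw [g, φ_ι, φf_apply, init_single_last, map_zero, Pi.single_eq_same, one_smul]
  simp

lemma φ_Ω (n : ℕ) : φ n (Ω n) = (1, -1) := by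
  rw [Ω, map_mul, φθ, φ_glast, Prod.mk_mul_mk, ω_sq, mul_neg, ω_sq]

lemma φ_p (n : ℕ) : φ n (pI n) = (1, 0) := by
  rw [pI, map_smul, map_add, map_one, φ_Ω, Prod.one_eq_mk, Prod.mk_add_mk, Prod.smul_mk]
  rw [show (1:CliffordC (2*n)) + 1 = (2:ℂ) • 1 by rw [two_smul]]
  rw [smul_smul]
  norm_num

lemma φ_q (n : ℕ) : φ n (qI n) = (0, 1) := by
  rw [qI, map_smul, map_sub, map_one, φ_Ω, Prod.one_eq_mk, Prod.mk_sub_mk, Prod.smul_mk]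
  rw [show (1:CliffordC (2*n)) - -1 = (2:ℂ) • 1 by rw [two_smul]; abel]
  rw [smul_smul]
  norm_num

lemma hφψ (n : ℕ) : (φ n).comp (ψ n)
    = AlgHom.id ℂ (CliffordC (2*n) × CliffordC (2*n)) := by
  refine AlgHom.ext fun x => ?_
  show φ n (ψ n x) = x
  have : ψ n x = θ n x.1 * pI n + θ n x.2 * qI n := ψL_apply n x
  rw [this, map_add, map_mul, map_mul, φθ, φθ, φ_p, φ_q,
    Prod.mk_mul_mk, Prod.mk_mul_mk, Prod.mk_add_mk]
  simp

lemma vector_split (n : ℕ) (v : Fin (2*n+1) → ℂ) :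
    extL n (initL n v)
      + v (Fin.last (2*n)) • (Pi.single (Fin.last (2*n)) 1 : Fin (2*n+1) → ℂ) = v := by
  funext j
  refine Fin.lastCases ?_ (fun j => ?_) j
  · simp [extL, initL]
  · simp [extL, initL, LinearMap.funLeft, Fin.snoc_castSucc, Pi.single_apply,
      (Fin.castSucc_lt_last j).ne]

lemma hψφ (n : ℕ) : (ψ n).comp (φ n) = AlgHom.id ℂ (CliffordC (2*n+1)) := by
  refine CliffordAlgebra.hom_ext (LinearMap.ext fun v => ?_)
  simp only [LinearMap.comp_apply, AlgHom.toLinearMap_apply, AlgHom.comp_apply,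
    AlgHom.id_apply]
  rw [φ_ι]
  have : ψ n (φf n v) = θ n (φf n v).1 * pI n + θ n (φf n v).2 * qI n := ψL_apply n _
  rw [this, φf_apply]
  simp only [map_add, map_sub, map_smul, θ_ι]
  set x := CliffordAlgebra.ι (Qf (2*n+1)) (extL n (initL n v))
  set t := v (Fin.last (2*n))
  rw [add_mul, sub_mul, smul_mul_assoc, smul_mul_assoc]
  rw [show x * pI n + t • (θ n (ω n) * pI n) + (x * qI n - t • (θ n (ω n) * qI n))
      = x * (pI n + qI n) + t • (θ n (ω n) * (pI n - qI n)) by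
    rw [mul_add x, mul_sub (θ n (ω n)), smul_sub]; abel]
  rw [pq_add, pq_sub, mul_one, θω_Ω, g]
  rw [← map_smul, ← map_add, vector_split]

end CliffOdd
/-- The odd complex Clifford algebra is a product of two copies of the even one:
`C(2n+1) ≅ C(2n) × C(2n)` as ℂ-algebras. -/
theorem clifford_odd_prod (n : ℕ) :
    Nonempty (CliffordC (2 * n + 1) ≃ₐ[ℂ] (CliffordC (2 * n) × CliffordC (2 * n))) := by
  exact ⟨AlgEquiv.ofAlgHom (CliffOdd.φ n) (CliffOdd.ψ n) (CliffOdd.hφψ n) (CliffOdd.hψφ n)⟩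
end

section
/- In the spin representation of the even Clifford algebra on the exterior algebra of ℂ^n, the product of all 2n generators equals i^n times the parity operator: the composite of linear endomorphisms ω_1 ∘ ω_2 ∘ ⋯ ∘ ω_{2n} equals i^n · σ, where σ is the grading involution. -/
noncomputable section

variable (n : ℕ)

/-- The exterior algebra `E = Λ(ℂ^n)`, i.e. the Clifford algebra of the zero
quadratic form on `Fin n → ℂ`. -/
abbrev ExtC (n : ℕ) := ExteriorAlgebra ℂ (Fin n → ℂ)

/-- `Q_j`: left multiplication by `ι(e_j)` on the exterior algebra. -/
def Qop (n : ℕ) (j : Fin n) : Module.End ℂ (ExtC n) :=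
  LinearMap.mulLeft ℂ (ExteriorAlgebra.ι ℂ (Pi.single j 1))

/-- `P_j`: left contraction (interior product) by the `j`-th coordinate functional. -/
def Pop (n : ℕ) (j : Fin n) : Module.End ℂ (ExtC n) :=
  CliffordAlgebra.contractLeft (LinearMap.proj j : (Fin n → ℂ) →ₗ[ℂ] ℂ)

/-- The generators of the spin representation: `ω_{2j−1} = Q_j + P_j` and
`ω_{2j} = i (Q_j − P_j)`; here indices are zero-based, so `omegaOp i` with
`i.val` even is `ω_{2j-1}` for `j = i.val/2 + 1`. -/
def omegaOp (n : ℕ) (i : Fin (2 * n)) : Module.End ℂ (ExtC n) :=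
  if i.val % 2 = 0 then
    Qop n ⟨i.val / 2, by omega⟩ + Pop n ⟨i.val / 2, by omega⟩
  else
    Complex.I • (Qop n ⟨i.val / 2, by omega⟩ - Pop n ⟨i.val / 2, by omega⟩)

namespace SpinAux

/-- The parity operator `T_j = P_j Q_j − Q_j P_j`. -/
def Top (n : ℕ) (j : Fin n) : Module.End ℂ (ExtC n) :=
  Pop n j * Qop n j - Qop n j * Pop n j

/-- The product of all the `T_j`. -/
def Fprod (n : ℕ) : Module.End ℂ (ExtC n) :=
  (List.ofFn fun j : Fin n => Top n j).prod

/-- The grading involution as a linear endomorphism. -/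
def invol (n : ℕ) : Module.End ℂ (ExtC n) :=
  (CliffordAlgebra.involute (Q := (0 : QuadraticForm ℂ (Fin n → ℂ)))).toLinearMap

lemma Q_sq (j : Fin n) : Qop n j * Qop n j = 0 := by
  refine LinearMap.ext fun x => ?_
  simp [Qop, LinearMap.mulLeft_apply, ← mul_assoc, ExteriorAlgebra.ι_sq_zero]

lemma P_sq (j : Fin n) : Pop n j * Pop n j = 0 := by
  refine LinearMap.ext fun x => ?_
  simp [Pop, CliffordAlgebra.contractLeft_contractLeft]

lemma PQ_anticomm (j k : Fin n) :
    Pop n j * Qop n k = (if k = j then (1:ℂ) else 0) • 1 - Qop n k * Pop n j := by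
  refine LinearMap.ext fun x => ?_
  simp only [Pop, Qop, Module.End.mul_apply, LinearMap.mulLeft_apply,
    CliffordAlgebra.contractLeft_ι_mul, LinearMap.sub_apply, LinearMap.smul_apply,
    Module.End.one_apply, LinearMap.proj_apply, Pi.single_apply]
  by_cases h : k = j
  · simp [h]
  · have h' : j ≠ k := fun hh => h hh.symm
    simp [h, h']

lemma PQ_same (j : Fin n) : Pop n j * Qop n j = 1 - Qop n j * Pop n j := by
  simpa using PQ_anticomm n j j

lemma PQ_ne {j k : Fin n} (h : k ≠ j) : Pop n j * Qop n k = -(Qop n k * Pop n j) := by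
  simpa [h] using PQ_anticomm n j k

lemma QQ_anticomm (j k : Fin n) : Qop n j * Qop n k = -(Qop n k * Qop n j) := by
  refine LinearMap.ext fun x => ?_
  have h := ExteriorAlgebra.ι_add_mul_swap (R := ℂ)
    (Pi.single j (1:ℂ) : Fin n → ℂ) (Pi.single k 1)
  simp only [Qop, Module.End.mul_apply, LinearMap.mulLeft_apply, LinearMap.neg_apply, ← mul_assoc]
  rw [eq_comm, neg_eq_iff_add_eq_zero, ← add_mul]
  rw [add_comm] at h
  rw [h, zero_mul]

/-- Abstract computation: if `q² = 0` and `pq = 1 - qp`, then `T = pq - qp`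
anticommutes with `q`. -/
lemma ring_anticomm {R : Type*} [Ring R] {p q : R} (hq : q * q = 0)
    (hpq : p * q = 1 - q * p) : (p * q - q * p) * q = -(q * (p * q - q * p)) := by
  have h2 : q * (p * q) = q := by
    rw [hpq, mul_sub, mul_one, ← mul_assoc, hq, zero_mul, sub_zero]
  have h3 : q * (p * q - q * p) = q := by
    rw [mul_sub, h2, ← mul_assoc, hq, zero_mul, sub_zero]
  have h4 : (p * q - q * p) * q = -q := by
    rw [sub_mul, mul_assoc, hq, mul_zero, zero_sub, mul_assoc, h2]
  rw [h3, h4]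

/-- Abstract computation: if `q'` and `p` both anticommute with `q`, then
`pq' - q'p` commutes with `q`. -/
lemma ring_comm {R : Type*} [Ring R] {p q' q : R} (hqq : q' * q = -(q * q'))
    (hpq : p * q = -(q * p)) : (p * q' - q' * p) * q = q * (p * q' - q' * p) := by
  have h1 : p * q' * q = q * (p * q') := by
    rw [mul_assoc, hqq, mul_neg, ← mul_assoc, hpq, neg_mul, neg_neg, mul_assoc]
  have h2 : q' * p * q = q * (q' * p) := by
    rw [mul_assoc, hpq, mul_neg, ← mul_assoc, hqq, neg_mul, neg_neg, mul_assoc]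
  rw [sub_mul, h1, h2, mul_sub]

lemma T_Q_same (j : Fin n) : Top n j * Qop n j = -(Qop n j * Top n j) :=
  ring_anticomm (Q_sq n j) (PQ_same n j)

lemma T_Q_ne {j k : Fin n} (h : k ≠ j) : Top n j * Qop n k = Qop n k * Top n j :=
  ring_comm (QQ_anticomm n j k) (PQ_ne n h)

lemma T_one (j : Fin n) : Top n j 1 = 1 := by
  simp [Top, Pop, Qop, CliffordAlgebra.contractLeft_one, CliffordAlgebra.contractLeft_ι_mul,
    CliffordAlgebra.contractLeft_algebraMap]

/-- Product of a list where exactly one element anticommutes with `q` and the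
rest commute. -/
lemma prod_anticomm {R : Type*} [Ring R] : ∀ (m : ℕ) (g : Fin m → R) (q : R) (k : Fin m),
    (∀ j, j ≠ k → g j * q = q * g j) → (g k * q = -(q * g k)) →
    (List.ofFn g).prod * q = -(q * (List.ofFn g).prod) := by
  intro m
  induction m with
  | zero => exact fun g q k => k.elim0
  | succ m ih =>
    intro g q k hcomm hanti
    rw [List.ofFn_succ, List.prod_cons]
    rcases Fin.eq_zero_or_eq_succ k with hk | ⟨k', rfl⟩
    · subst hk
      have hrest : (List.ofFn fun i : Fin m => g i.succ).prod * q
          = q * (List.ofFn fun i : Fin m => g i.succ).prod := by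
        refine Commute.list_prod_left _ q fun x hx => ?_
        obtain ⟨i, rfl⟩ := List.mem_ofFn.mp hx
        exact hcomm i.succ (Fin.succ_ne_zero i)
      rw [mul_assoc, hrest, ← mul_assoc, hanti, neg_mul, mul_assoc]
    · have ih' := ih (fun i => g i.succ) q k'
        (fun j hj => hcomm j.succ (by simpa using hj)) hanti
      rw [mul_assoc, ih', mul_neg, ← mul_assoc, hcomm 0 (Fin.succ_ne_zero k').symm, mul_assoc]

lemma F_Q (k : Fin n) : Fprod n * Qop n k = -(Qop n k * Fprod n) :=
  prod_anticomm n _ (Qop n k) k (fun j hj => T_Q_ne n (Ne.symm hj)) (T_Q_same n k)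

lemma F_one : Fprod n 1 = 1 := by
  have key : ∀ (l : List (Module.End ℂ (ExtC n))), (∀ a ∈ l, a 1 = 1) → l.prod 1 = 1 := by
    intro l
    induction l with
    | nil => simp
    | cons a t ih =>
      intro h
      rw [List.prod_cons, Module.End.mul_apply, ih (fun b hb => h b (List.mem_cons_of_mem a hb)),
        h a (List.mem_cons_self (a := a) (l := t))]
  refine key _ fun a ha => ?_
  obtain ⟨j, rfl⟩ := List.mem_ofFn.mp ha
  exact T_one n j

lemma invol_Q (k : Fin n) : invol n * Qop n k = -(Qop n k * invol n) := by
  refine LinearMap.ext fun x => ?_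
  simp [invol, Qop, ExteriorAlgebra.ι]

lemma G_Q (k : Fin n) :
    (invol n * Fprod n) * Qop n k = Qop n k * (invol n * Fprod n) := by
  refine LinearMap.ext fun x => ?_
  have h1 := LinearMap.congr_fun (F_Q n k) x
  have h2 := LinearMap.congr_fun (invol_Q n k) (Fprod n x)
  simp only [Module.End.mul_apply, LinearMap.neg_apply] at h1 h2 ⊢
  rw [h1, map_neg, h2, neg_neg]

lemma G_mul (a : ExtC n) : ∀ y : ExtC n,
    (invol n * Fprod n) (a * y) = a * (invol n * Fprod n) y := by
  induction a using CliffordAlgebra.induction with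
  | algebraMap r =>
    intro y
    simp only [← Algebra.smul_def, map_smul]
  | ι v =>
    intro y
    have hsingle : ∀ k : Fin n, (Pi.single k (v k) : Fin n → ℂ) = v k • (Pi.single k 1 : Fin n → ℂ) := by
      intro k
      rw [← Pi.single_smul, smul_eq_mul, mul_one]
    have hι : ExteriorAlgebra.ι ℂ v
        = ∑ k, v k • ExteriorAlgebra.ι ℂ (Pi.single k (1:ℂ) : Fin n → ℂ) := by
      conv_lhs => rw [← Finset.univ_sum_single v]
      rw [map_sum]
      exact Finset.sum_congr rfl fun k _ => by rw [hsingle, map_smul]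
    rw [hι, Finset.sum_mul, map_sum, Finset.sum_mul]
    refine Finset.sum_congr rfl fun k _ => ?_
    rw [smul_mul_assoc, map_smul, smul_mul_assoc]
    congr 1
    have h := LinearMap.congr_fun (G_Q n k) y
    simpa [Qop, Module.End.mul_apply, LinearMap.mulLeft_apply] using h
  | mul a b ha hb =>
    intro y
    rw [mul_assoc, ha, hb, ← mul_assoc]
  | add a b ha hb =>
    intro y
    rw [add_mul, map_add, ha, hb, add_mul]

lemma G_eq_one : invol n * Fprod n = 1 := by
  refine LinearMap.ext fun x => ?_
  have hG1 : (invol n * Fprod n) 1 = 1 := by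
    rw [Module.End.mul_apply, F_one]
    simp [invol]
  calc (invol n * Fprod n) x = (invol n * Fprod n) (x * 1) := by rw [mul_one]
  _ = x * (invol n * Fprod n) 1 := G_mul n x 1
  _ = x := by rw [hG1, mul_one]

lemma invol_sq : invol n * invol n = 1 := by
  refine LinearMap.ext fun x => ?_
  simp [invol]

lemma F_eq_invol : Fprod n = invol n := by
  have h := congrArg (invol n * ·) (G_eq_one n)
  simpa [← mul_assoc, invol_sq] using h

/-- `ω_{2j} ω_{2j+1} = i T_j`. -/
lemma pair_eq (j : Fin n) (h1 : 2 * j.val < 2 * n) (h2 : 2 * j.val + 1 < 2 * n) :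
    omegaOp n ⟨2 * j.val, h1⟩ * omegaOp n ⟨2 * j.val + 1, h2⟩ = Complex.I • Top n j := by
  have e0 : (2 * j.val) % 2 = 0 := by omega
  have e1 : (2 * j.val + 1) % 2 = 1 := by omega
  have d0 : (2 * j.val) / 2 = j.val := by omega
  have d1 : (2 * j.val + 1) / 2 = j.val := by omega
  have hj : ∀ (h : (2 * j.val) / 2 < n), (⟨(2 * j.val) / 2, h⟩ : Fin n) = j :=
    fun h => Fin.ext d0
  have hj' : ∀ (h : (2 * j.val + 1) / 2 < n), (⟨(2 * j.val + 1) / 2, h⟩ : Fin n) = j :=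
    fun h => Fin.ext d1
  rw [omegaOp, omegaOp]
  simp only [e0, e1, if_pos, if_false, one_ne_zero, reduceCtorEq]
  rw [hj _, hj' _]
  rw [mul_smul_comm]
  congr 1
  have expand : (Qop n j + Pop n j) * (Qop n j - Pop n j)
      = Qop n j * Qop n j - Qop n j * Pop n j + (Pop n j * Qop n j - Pop n j * Pop n j) := by
    rw [add_mul, mul_sub, mul_sub]
  rw [expand, Q_sq, P_sq, zero_sub, sub_zero, Top]
  abel

/-- Pair up a product over `Fin (2m)`. -/
lemma ofFn_pair_prod {M : Type*} [Monoid M] : ∀ (m : ℕ) (f : ℕ → M),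
    (List.ofFn fun i : Fin (2 * m) => f i.val).prod
      = (List.ofFn fun j : Fin m => f (2 * j.val) * f (2 * j.val + 1)).prod := by
  intro m
  induction m with
  | zero => intro f; rfl
  | succ m ih =>
    intro f
    have h1 : (List.ofFn fun i : Fin (2 * (m + 1)) => f i.val)
        = f 0 :: f 1 :: List.ofFn fun i : Fin (2 * m) => f (i.val + 2) := by
      have : (List.ofFn fun i : Fin (2 * (m + 1)) => f i.val)
          = List.ofFn fun i : Fin (2 * m + 1 + 1) => f i.val := rfl
      rw [this, List.ofFn_succ, List.ofFn_succ]
      simp [Fin.val_succ]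
    have h2 : (List.ofFn fun j : Fin (m + 1) => f (2 * j.val) * f (2 * j.val + 1))
        = (f 0 * f 1) :: List.ofFn fun j : Fin m => f (2 * j.val + 2) * f (2 * j.val + 2 + 1) := by
      rw [List.ofFn_succ]
      refine congrArg₂ List.cons (by norm_num) ?_
      refine congrArg List.ofFn (funext fun j => ?_)
      have e : 2 * (j.val + 1) = 2 * j.val + 2 := by ring
      simp [Fin.val_succ, e]
    rw [h1, h2, List.prod_cons, List.prod_cons, List.prod_cons,
      ih (fun i => f (i + 2)), ← mul_assoc]

/-- Pull a scalar out of each factor of an `ofFn` product of endomorphisms. -/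
lemma smul_ofFn_prod {A : Type*} [Ring A] [Algebra ℂ A] :
    ∀ (m : ℕ) (c : ℂ) (g : Fin m → A),
    (List.ofFn fun j => c • g j).prod = c ^ m • (List.ofFn g).prod := by
  intro m
  induction m with
  | zero => intro c g; simp
  | succ m ih =>
    intro c g
    rw [List.ofFn_succ, List.prod_cons, ih c (fun i => g i.succ), List.ofFn_succ, List.prod_cons,
      smul_mul_smul_comm, pow_succ, mul_comm c (c ^ m)]

end SpinAux

/-- In the spin representation of the even Clifford algebra on `Λ(ℂ^n)`, the
composite `ω_1 ∘ ω_2 ∘ ⋯ ∘ ω_{2n}` equals `i^n` times the grading involution. -/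
theorem spin_rep_product_eq_parity (n : ℕ) :
    (List.ofFn fun i : Fin (2 * n) => omegaOp n i).prod =
      Complex.I ^ n •
        (CliffordAlgebra.involute (Q := (0 : QuadraticForm ℂ (Fin n → ℂ)))).toLinearMap := by
  classical
  set f : ℕ → Module.End ℂ (ExtC n) :=
    fun i => if h : i < 2 * n then omegaOp n ⟨i, h⟩ else 1 with hf
  have h0 : (List.ofFn fun i : Fin (2 * n) => omegaOp n i)
      = List.ofFn fun i : Fin (2 * n) => f i.val := by
    refine congrArg List.ofFn (funext fun i => ?_)
    rw [hf]
    simp [i.isLt]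
  have hpair : ∀ j : Fin n, f (2 * j.val) * f (2 * j.val + 1) = Complex.I • SpinAux.Top n j := by
    intro j
    have l1 : 2 * j.val < 2 * n := by omega
    have l2 : 2 * j.val + 1 < 2 * n := by omega
    rw [hf]
    simp only [dif_pos l1, dif_pos l2]
    exact SpinAux.pair_eq n j l1 l2
  rw [h0, SpinAux.ofFn_pair_prod n f]
  have : (List.ofFn fun j : Fin n => f (2 * j.val) * f (2 * j.val + 1))
      = List.ofFn fun j : Fin n => Complex.I • SpinAux.Top n j :=
    congrArg List.ofFn (funext hpair)
  rw [this, SpinAux.smul_ofFn_prod n Complex.I (fun j => SpinAux.Top n j)]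
  have : (List.ofFn fun j : Fin n => SpinAux.Top n j).prod = SpinAux.invol n :=
    SpinAux.F_eq_invol n
  rw [this]
  rfl
end
end
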